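/- Let k ≥ 4 be an integer and let G be a finite simple (P₂ ∪ kP₁)-free graph that is not hamiltonian, in which every longest cycle is edge-dominating, and with minimum degree δ(G) ≥ k. Choose a longest cycle C of G and a vertex h ∉ V(C) so that d_G(h) is maximum over all such pairs (longest cycle, vertex outside it); set d = d_G(h) and U = {v⁺ : v ∈ N_G(h)}, where x⁺ denotes the successor of x along a fixed orientation of C. Then d_G(u) ≤ d for every u ∈ U, and consequently e_G(U, N_G(U)) ≤ d². -/

import Mathlib

open SimpleGraph Set

/-- `G` has no induced subgraph isomorphic to `P₂ ∪ kP₁`: there are no `k+2` distinct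
vertices `x, y, z₁, …, z_k` with `xy ∈ E(G)` and no other edges among them. -/
def P2kP1Free {V : Type*} (G : SimpleGraph V) (k : ℕ) : Prop :=
  ¬ ∃ (x y : V) (z : Fin k → V),
      Function.Injective z ∧ (∀ i, z i ≠ x) ∧ (∀ i, z i ≠ y) ∧ x ≠ y ∧
      G.Adj x y ∧ (∀ i, ¬ G.Adj x (z i)) ∧ (∀ i, ¬ G.Adj y (z i)) ∧
      ∀ i j, ¬ G.Adj (z i) (z j)

/-- `X` is an independent set of `G`. -/
def IsIndep {V : Type*} (G : SimpleGraph V) (X : Set V) : Prop :=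
  ∀ x ∈ X, ∀ y ∈ X, ¬ G.Adj x y

/-- The neighbourhood `N_G(S) = ⋃_{x ∈ S} (N_G(x) \ S)` of a set `S`. -/
def setNbhd {V : Type*} (G : SimpleGraph V) (S : Set V) : Set V :=
  {v | v ∉ S ∧ ∃ u ∈ S, G.Adj u v}

/-- `G` is 1-tough: `|S| ≥ ω(G - S)` whenever `ω(G - S) ≥ 2`. -/
def OneTough {V : Type*} (G : SimpleGraph V) : Prop :=
  ∀ S : Set V, 2 ≤ Nat.card (G.induce Sᶜ).ConnectedComponent →
    Nat.card (G.induce Sᶜ).ConnectedComponent ≤ S.ncard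

/-- `G` is `m`-connected: `|V(G)| > m` and `G - S` is connected for every `S` with `|S| < m`. -/
def MConnected {V : Type*} (G : SimpleGraph V) (m : ℕ) : Prop :=
  m < Nat.card V ∧ ∀ S : Set V, S.ncard < m → (G.induce Sᶜ).Connected

/-- A cycle of `G` with a fixed orientation, given as an injective cyclic sequence of
`n ≥ 3` pairwise adjacent-in-sequence vertices; the successor of `f i` is `f (i + 1)`. -/
def IsCycleMap {V : Type*} (G : SimpleGraph V) {n : ℕ} (f : ZMod n → V) : Prop :=
  3 ≤ n ∧ Function.Injective f ∧ ∀ i, G.Adj (f i) (f (i + 1))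

/-- A longest cycle of `G`. -/
def IsLongestCycleMap {V : Type*} (G : SimpleGraph V) {n : ℕ} (f : ZMod n → V) : Prop :=
  IsCycleMap G f ∧ ∀ (m : ℕ) (g : ZMod m → V), IsCycleMap G g → m ≤ n

/-- `G` is hamiltonian: it has a cycle passing through all of its vertices. -/
def IsHamiltonianGraph {V : Type*} (G : SimpleGraph V) : Prop :=
  ∃ (n : ℕ) (f : ZMod n → V), IsCycleMap G f ∧ ∀ v, v ∈ Set.range f

/-- The cycle `f` is an edge-dominating cycle of `G`: every connected component of
`G - V(C)` consists of exactly one vertex. -/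
def IsEdgeDomCycle {V : Type*} (G : SimpleGraph V) {n : ℕ} (f : ZMod n → V) : Prop :=
  IsCycleMap G f ∧
    ∀ c : (G.induce (Set.range f)ᶜ).ConnectedComponent, Nat.card c.supp = 1

/-- The number of edges of `G` between two disjoint sets `S` and `T`. -/
noncomputable def eBetween {V : Type*} (G : SimpleGraph V) (S T : Set V) : ℕ :=
  {p : V × V | p.1 ∈ S ∧ p.2 ∈ T ∧ G.Adj p.1 p.2}.ncard

lemma mk_cycle {V : Type*} (G : SimpleGraph V) (m : ℕ) (hm : 3 ≤ m) (σ : ℕ → V)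
    (hinj : ∀ a < m, ∀ b < m, σ a = σ b → a = b)
    (hadj : ∀ r, r + 1 < m → G.Adj (σ r) (σ (r + 1)))
    (hlast : G.Adj (σ (m - 1)) (σ 0)) :
    IsCycleMap G (fun t : ZMod m => σ t.val) := by
  haveI : NeZero m := ⟨by omega⟩
  refine ⟨hm, ?_, ?_⟩
  · intro t₁ t₂ hEq
    exact ZMod.val_injective m (hinj _ (ZMod.val_lt t₁) _ (ZMod.val_lt t₂) hEq)
  · intro t
    have ht : t.val < m := ZMod.val_lt t
    have h1 : (1 : ZMod m).val = 1 := by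
      rw [ZMod.val_one_eq_one_mod]; exact Nat.mod_eq_of_lt (by omega)
    have hv : (t + 1).val = (t.val + 1) % m := by rw [ZMod.val_add, h1]
    by_cases hc : t.val + 1 = m
    · have : (t + 1).val = 0 := by rw [hv, hc, Nat.mod_self]
      have ht' : t.val = m - 1 := by omega
      simp only [this, ht']
      exact hlast
    · have : (t + 1).val = t.val + 1 := by rw [hv]; exact Nat.mod_eq_of_lt (by omega)
      simp only [this]
      exact hadj _ (by omega)

lemma cast_nat_eq_iff {n : ℕ} (hn : 0 < n) {a b : ℕ} (ha : a < n) (hb : b < n)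
    (hEq : (a : ZMod n) = b) : a = b := by
  haveI : NeZero n := ⟨hn.ne'⟩
  have := congrArg ZMod.val hEq
  rwa [ZMod.val_cast_of_lt ha, ZMod.val_cast_of_lt hb] at this


lemma surgeryA {V : Type*} {G : SimpleGraph V} {n : ℕ} {f : ZMod n → V}
    (hC : IsLongestCycleMap G f) {h : V} (hh : h ∉ Set.range f)
    {i : ZMod n} (h1 : G.Adj h (f i)) (h2 : G.Adj h (f (i + 1))) : False := by
  obtain ⟨⟨hn3, hfinj, hfadj⟩, hmax⟩ := hC
  haveI : NeZero n := ⟨by omega⟩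
  have hcyc : IsCycleMap G (fun t : ZMod (n+1) =>
      (fun r : ℕ => if r = n then h else f (i + 1 + (r : ZMod n))) t.val) := by
    refine mk_cycle G (n+1) (by omega)
      (fun r : ℕ => if r = n then h else f (i + 1 + (r : ZMod n))) ?_ ?_ ?_
    · intro a ha b hb hab
      split_ifs at hab with h1' h2'
      · omega
      · exact absurd ⟨_, hab.symm⟩ hh
      · exact absurd ⟨_, hab⟩ hh
      · have := add_left_cancel (hfinj hab)
        have := cast_nat_eq_iff (by omega) (by omega) (by omega) this
        omega
    · intro r hr
      by_cases hc : r + 1 = n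
      · simp only [if_neg (by omega : ¬ r = n), if_pos hc]
        have : i + 1 + (r : ZMod n) = i := by
          have : ((r : ℕ) : ZMod n) = (n : ZMod n) - 1 := by
            have : r = n - 1 := by omega
            subst this
            push_cast [Nat.cast_sub (by omega : 1 ≤ n)]
            ring
          rw [this, ZMod.natCast_self]
          ring
        rw [this]
        exact h1.symm
      · simp only [if_neg (by omega : ¬ r = n), if_neg (by omega : ¬ r + 1 = n)]
        have harg : i + 1 + ((r+1 : ℕ) : ZMod n) = (i + 1 + (r : ZMod n)) + 1 := by
          push_cast; ring
        rw [harg]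
        exact hfadj _
    · simp only [Nat.add_sub_cancel, if_pos rfl, if_neg (by omega : ¬ (0:ℕ) = n),
        Nat.cast_zero, add_zero]
      exact h2
  have := hmax (n+1) _ hcyc
  omega

lemma surgeryB {V : Type*} {G : SimpleGraph V} {n : ℕ} {f : ZMod n → V}
    (hC : IsLongestCycleMap G f) {h : V} (hh : h ∉ Set.range f)
    {i j : ZMod n} (hij : i ≠ j)
    (h1 : G.Adj h (f i)) (h2 : G.Adj h (f j)) (h3 : G.Adj (f (i + 1)) (f (j + 1))) :
    False := by
  obtain ⟨⟨hn3, hfinj, hfadj⟩, hmax⟩ := hC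
  haveI : NeZero n := ⟨by omega⟩
  set a : ℕ := (i - j).val with ha_def
  have haN : a < n := ZMod.val_lt _
  have ha0 : a ≠ 0 := by
    intro h0
    rw [ha_def] at h0
    exact hij (sub_eq_zero.mp ((ZMod.val_eq_zero _).mp h0))
  have key : ((a : ℕ) : ZMod n) = i - j := by
    rw [ha_def, ZMod.natCast_val, ZMod.cast_id]
  have keyj : i - ((a : ℕ) : ZMod n) = j := by rw [key]; ring
  have keym1 : ((n - 1 : ℕ) : ZMod n) = -1 := by
    push_cast [Nat.cast_sub (by omega : 1 ≤ n)]
    simp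
  have hcyc : IsCycleMap G (fun t : ZMod (n+1) =>
      (fun r : ℕ => if r = 0 then h else
        if r ≤ a then f (i - ((r - 1 : ℕ) : ZMod n))
        else f (i - ((n + a - r : ℕ) : ZMod n))) t.val) := by
    refine mk_cycle G (n+1) (by omega)
      (fun r : ℕ => if r = 0 then h else
        if r ≤ a then f (i - ((r - 1 : ℕ) : ZMod n))
        else f (i - ((n + a - r : ℕ) : ZMod n))) ?_ ?_ ?_
    · intro p hp q hq hpq
      by_cases hp0 : p = 0 <;> by_cases hq0 : q = 0
      · omega
      · rw [if_pos hp0, if_neg hq0] at hpq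
        split_ifs at hpq <;> exact absurd ⟨_, hpq.symm⟩ hh
      · rw [if_neg hp0, if_pos hq0] at hpq
        split_ifs at hpq <;> exact absurd ⟨_, hpq⟩ hh
      · rw [if_neg hp0, if_neg hq0] at hpq
        split_ifs at hpq with e1 e2 e2 <;>
          { have hz := sub_right_injective (hfinj hpq)
            have := cast_nat_eq_iff (by omega) (by omega) (by omega) hz
            omega }
    · intro r hr
      by_cases hr0 : r = 0
      · subst hr0
        rw [if_pos rfl, if_neg (by omega : ¬ (0:ℕ)+1 = 0), if_pos (by omega : 0+1 ≤ a)]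
        simpa using h1
      · rw [if_neg hr0, if_neg (by omega : ¬ r+1 = 0)]
        by_cases hra : r + 1 ≤ a
        · rw [if_pos (by omega : r ≤ a), if_pos hra]
          have harg : i - ((r - 1 : ℕ) : ZMod n) = (i - ((r + 1 - 1 : ℕ) : ZMod n)) + 1 := by
            push_cast [Nat.cast_sub (by omega : 1 ≤ r)]
            ring
          rw [harg]
          exact (hfadj _).symm
        · by_cases hra2 : r ≤ a
          · have hreq : r = a := by omega
            rw [if_pos hra2, if_neg hra]
            have harg1 : i - ((r - 1 : ℕ) : ZMod n) = j + 1 := by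
              rw [hreq]
              push_cast [Nat.cast_sub (by omega : 1 ≤ a)]
              rw [key]
              ring
            have harg2 : i - ((n + a - (r + 1) : ℕ) : ZMod n) = i + 1 := by
              have : n + a - (r + 1) = n - 1 := by omega
              rw [this, keym1]
              ring
            rw [harg1, harg2]
            exact h3.symm
          · rw [if_neg hra2, if_neg (by omega : ¬ r + 1 ≤ a)]
            have harg : i - ((n + a - (r + 1) : ℕ) : ZMod n)
                = (i - ((n + a - r : ℕ) : ZMod n)) + 1 := by
              push_cast [Nat.cast_sub (show r ≤ n + a by omega),
                Nat.cast_sub (show r + 1 ≤ n + a by omega)]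
              ring
            rw [harg]
            exact hfadj _
    · simp only [Nat.add_sub_cancel]
      rw [if_neg (by omega : ¬ n = 0), if_neg (by omega : ¬ n ≤ a), if_pos trivial]
      have : (n + a - n : ℕ) = a := by omega
      rw [this, keyj]
      exact h2.symm
  have := hmax (n+1) _ hcyc
  omega

lemma surgeryG {V : Type*} {G : SimpleGraph V} {n : ℕ} {f : ZMod n → V}
    (hC : IsLongestCycleMap G f) {h : V} (hh : h ∉ Set.range f)
    {i j : ZMod n} (hij : i ≠ j) (hji : j ≠ i + 1)
    (h1 : G.Adj h (f i)) (h2 : G.Adj h (f j)) (h3 : G.Adj (f (i + 2)) (f (j + 1))) :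
    ∃ g : ZMod n → V, IsLongestCycleMap G g ∧ f (i + 1) ∉ Set.range g := by
  obtain ⟨⟨hn3, hfinj, hfadj⟩, hmax⟩ := hC
  haveI : NeZero n := ⟨by omega⟩
  set a : ℕ := (i - j).val with ha_def
  have haN : a < n := ZMod.val_lt _
  have ha0 : a ≠ 0 := by
    intro h0
    rw [ha_def] at h0
    exact hij (sub_eq_zero.mp ((ZMod.val_eq_zero _).mp h0))
  have key : ((a : ℕ) : ZMod n) = i - j := by
    rw [ha_def, ZMod.natCast_val, ZMod.cast_id]
  have keyj : i - ((a : ℕ) : ZMod n) = j := by rw [key]; ring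
  have keym1 : ((n - 1 : ℕ) : ZMod n) = -1 := by
    push_cast [Nat.cast_sub (by omega : 1 ≤ n)]
    simp
  have keym2 : ((n - 2 : ℕ) : ZMod n) = -2 := by
    push_cast [Nat.cast_sub (by omega : 2 ≤ n)]
    simp
  have haN2 : a ≤ n - 2 := by
    by_contra hcon
    have hav : a = n - 1 := by omega
    apply hji
    have : ((a : ℕ) : ZMod n) = -1 := by rw [hav, keym1]
    rw [this] at key
    have : j = i + 1 := by linear_combination key
    exact this
  have hcyc : IsCycleMap G (fun t : ZMod n =>
      (fun r : ℕ => if r = 0 then h else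
        if r ≤ a then f (i - ((r - 1 : ℕ) : ZMod n))
        else f (i - ((n + a - 1 - r : ℕ) : ZMod n))) t.val) := by
    refine mk_cycle G n (by omega)
      (fun r : ℕ => if r = 0 then h else
        if r ≤ a then f (i - ((r - 1 : ℕ) : ZMod n))
        else f (i - ((n + a - 1 - r : ℕ) : ZMod n))) ?_ ?_ ?_
    · intro p hp q hq hpq
      by_cases hp0 : p = 0 <;> by_cases hq0 : q = 0
      · omega
      · rw [if_pos hp0, if_neg hq0] at hpq
        split_ifs at hpq <;> exact absurd ⟨_, hpq.symm⟩ hh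
      · rw [if_neg hp0, if_pos hq0] at hpq
        split_ifs at hpq <;> exact absurd ⟨_, hpq⟩ hh
      · rw [if_neg hp0, if_neg hq0] at hpq
        split_ifs at hpq with e1 e2 e2 <;>
          { have hz := sub_right_injective (hfinj hpq)
            have := cast_nat_eq_iff (by omega) (by omega) (by omega) hz
            omega }
    · intro r hr
      by_cases hr0 : r = 0
      · subst hr0
        rw [if_pos rfl, if_neg (by omega : ¬ (0:ℕ)+1 = 0), if_pos (by omega : 0+1 ≤ a)]
        simpa using h1
      · rw [if_neg hr0, if_neg (by omega : ¬ r+1 = 0)]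
        by_cases hra : r + 1 ≤ a
        · rw [if_pos (by omega : r ≤ a), if_pos hra]
          have harg : i - ((r - 1 : ℕ) : ZMod n) = (i - ((r + 1 - 1 : ℕ) : ZMod n)) + 1 := by
            push_cast [Nat.cast_sub (by omega : 1 ≤ r)]
            ring
          rw [harg]
          exact (hfadj _).symm
        · by_cases hra2 : r ≤ a
          · have hreq : r = a := by omega
            rw [if_pos hra2, if_neg hra]
            have harg1 : i - ((r - 1 : ℕ) : ZMod n) = j + 1 := by
              rw [hreq]
              push_cast [Nat.cast_sub (by omega : 1 ≤ a)]
              rw [key]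
              ring
            have harg2 : i - ((n + a - 1 - (r + 1) : ℕ) : ZMod n) = i + 2 := by
              have : n + a - 1 - (r + 1) = n - 2 := by omega
              rw [this, keym2]
              ring
            rw [harg1, harg2]
            exact h3.symm
          · rw [if_neg hra2, if_neg (by omega : ¬ r + 1 ≤ a)]
            have harg : i - ((n + a - 1 - (r + 1) : ℕ) : ZMod n)
                = (i - ((n + a - 1 - r : ℕ) : ZMod n)) + 1 := by
              push_cast [Nat.cast_sub (show r ≤ n + a - 1 by omega),
                Nat.cast_sub (show r + 1 ≤ n + a - 1 by omega)]
              ring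
            rw [harg]
            exact hfadj _
    · simp only
      rw [if_neg (by omega : ¬ n - 1 = 0), if_neg (by omega : ¬ n - 1 ≤ a),
        if_pos trivial]
      have : (n + a - 1 - (n - 1) : ℕ) = a := by omega
      rw [this, keyj]
      exact h2.symm
  refine ⟨_, ⟨hcyc, hmax⟩, ?_⟩
  rintro ⟨t, ht⟩
  simp only at ht
  have htv : t.val < n := ZMod.val_lt t
  split_ifs at ht with c1 c2
  · exact hh ⟨_, ht.symm⟩
  · have e : ((t.val - 1 : ℕ) : ZMod n) = ((n - 1 : ℕ) : ZMod n) := by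
      rw [keym1]
      linear_combination -(hfinj ht)
    have := cast_nat_eq_iff (by omega) (by omega : t.val - 1 < n) (by omega) e
    omega
  · have e : ((n + a - 1 - t.val : ℕ) : ZMod n) = ((n - 1 : ℕ) : ZMod n) := by
      rw [keym1]
      linear_combination -(hfinj ht)
    have := cast_nat_eq_iff (by omega) (by omega : n + a - 1 - t.val < n) (by omega) e
    omega

lemma surgeryF {V : Type*} {G : SimpleGraph V} {n : ℕ} {f : ZMod n → V}
    (hC : IsLongestCycleMap G f) {h : V} (hh : h ∉ Set.range f)
    {i : ZMod n} (h1 : G.Adj h (f i)) (h2 : G.Adj h (f (i + 2))) :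
    ∃ g : ZMod n → V, IsLongestCycleMap G g ∧ f (i + 1) ∉ Set.range g := by
  obtain ⟨⟨hn3, hfinj, hfadj⟩, hmax⟩ := hC
  haveI : NeZero n := ⟨by omega⟩
  have keym1 : ((n - 1 : ℕ) : ZMod n) = -1 := by
    push_cast [Nat.cast_sub (by omega : 1 ≤ n)]
    simp
  have hcyc : IsCycleMap G (fun t : ZMod n =>
      (fun r : ℕ => if r = 0 then h else f (i + 1 + (r : ZMod n))) t.val) := by
    refine mk_cycle G n (by omega)
      (fun r : ℕ => if r = 0 then h else f (i + 1 + (r : ZMod n))) ?_ ?_ ?_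
    · intro p hp q hq hpq
      by_cases hp0 : p = 0 <;> by_cases hq0 : q = 0
      · omega
      · rw [if_pos hp0, if_neg hq0] at hpq
        exact absurd ⟨_, hpq.symm⟩ hh
      · rw [if_neg hp0, if_pos hq0] at hpq
        exact absurd ⟨_, hpq⟩ hh
      · rw [if_neg hp0, if_neg hq0] at hpq
        have hz := add_left_cancel (hfinj hpq)
        exact cast_nat_eq_iff (by omega) (by omega) (by omega) hz
    · intro r hr
      by_cases hr0 : r = 0
      · subst hr0
        rw [if_pos rfl, if_neg (by omega : ¬ (0:ℕ)+1 = 0)]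
        have : i + 1 + (((0:ℕ)+1 : ℕ) : ZMod n) = i + 2 := by push_cast; ring
        rw [this]
        exact h2
      · rw [if_neg hr0, if_neg (by omega : ¬ r+1 = 0)]
        have : i + 1 + ((r+1 : ℕ) : ZMod n) = (i + 1 + (r : ZMod n)) + 1 := by
          push_cast; ring
        rw [this]
        exact hfadj _
    · simp only
      rw [if_neg (by omega : ¬ n - 1 = 0), if_pos trivial]
      have : i + 1 + ((n - 1 : ℕ) : ZMod n) = i := by rw [keym1]; ring
      rw [this]
      exact h1.symm
  refine ⟨_, ⟨hcyc, hmax⟩, ?_⟩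
  rintro ⟨t, ht⟩
  simp only at ht
  have htv : t.val < n := ZMod.val_lt t
  split_ifs at ht with c1
  · exact hh ⟨_, ht.symm⟩
  · have hz : ((t.val : ℕ) : ZMod n) = ((0 : ℕ) : ZMod n) := by
      push_cast
      linear_combination (hfinj ht)
    have := cast_nat_eq_iff (by omega) htv (by omega) hz
    omega

/-- Claim 3.3: `G` is `(P₂ ∪ kP₁)`-free, not hamiltonian, every longest
cycle is edge-dominating, and `δ(G) ≥ k`.  For a longest cycle `C` and `h ∉ V(C)` chosen
so that `d_G(h)` is maximum over all such pairs, with `d = d_G(h)` and `U` the set of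
successors of the neighbours of `h`, we have `d_G(u) ≤ d` for every `u ∈ U` and
`e_G(U, N_G(U)) ≤ d²`. -/
theorem stmt_8 {V : Type*} [Fintype V] (k : ℕ) (hk : 4 ≤ k) (G : SimpleGraph V)
    (hfree : P2kP1Free G k) (hnotham : ¬ IsHamiltonianGraph G)
    (hdom : ∀ (m : ℕ) (g : ZMod m → V), IsLongestCycleMap G g → IsEdgeDomCycle G g)
    (hdeg : ∀ v : V, k ≤ (G.neighborSet v).ncard)
    (n : ℕ) (f : ZMod n → V) (hC : IsLongestCycleMap G f)
    (h : V) (hh : h ∉ Set.range f)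
    (hmax : ∀ (m : ℕ) (g : ZMod m → V) (h' : V), IsLongestCycleMap G g →
      h' ∉ Set.range g → (G.neighborSet h').ncard ≤ (G.neighborSet h).ncard)
    (d : ℕ) (hd : d = (G.neighborSet h).ncard)
    (U : Set V) (hU : U = {w | ∃ i : ZMod n, G.Adj h (f i) ∧ w = f (i + 1)}) :
    (∀ u ∈ U, (G.neighborSet u).ncard ≤ d) ∧
    eBetween G U (setNbhd G U) ≤ d ^ 2 := by
  have hn3 : 3 ≤ n := hC.1.1
  have hfinj : Function.Injective f := hC.1.2.1
  have hfadj : ∀ t : ZMod n, G.Adj (f t) (f (t + 1)) := hC.1.2.2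
  haveI : NeZero n := ⟨by omega⟩
  haveI : Fact (1 < n) := ⟨by omega⟩
  have hNAH : ∀ j : ZMod n, G.Adj h (f j) → ¬ G.Adj h (f (j + 1)) :=
    fun j hj hj1 => (surgeryA hC hh hj hj1).elim
  -- independence of U ∪ {h}
  have hindep : ∀ p ∈ U ∪ {h}, ∀ q ∈ U ∪ {h}, ¬ G.Adj p q := by
    intro p hp q hq hpq
    rw [hU] at hp hq
    simp only [Set.mem_union, Set.mem_setOf_eq, Set.mem_singleton_iff] at hp hq
    rcases hp with (⟨jp, hjp, rfl⟩ | rfl) <;> rcases hq with (⟨jq, hjq, rfl⟩ | rfl)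
    · by_cases hjj : jp = jq
      · subst hjj; exact hpq.ne rfl
      · exact surgeryB hC hh hjj hjp hjq hpq
    · exact hNAH jp hjp hpq.symm
    · exact hNAH jq hjq hpq
    · exact hpq.ne rfl
  -- neighbours of h lie on the cycle
  have hNsub : G.neighborSet h ⊆ Set.range f := by
    intro x hx
    by_contra hxf
    obtain ⟨-, hcard⟩ := hdom n f hC
    have hadj' : (G.induce (Set.range f)ᶜ).Adj ⟨h, hh⟩ ⟨x, hxf⟩ := hx
    have hmem1 : (⟨h, hh⟩ : ↥(Set.range f)ᶜ) ∈
        ((G.induce (Set.range f)ᶜ).connectedComponentMk ⟨h, hh⟩).supp := by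
      rw [SimpleGraph.ConnectedComponent.mem_supp_iff]
    have hmem2 : (⟨x, hxf⟩ : ↥(Set.range f)ᶜ) ∈
        ((G.induce (Set.range f)ᶜ).connectedComponentMk ⟨h, hh⟩).supp := by
      rw [SimpleGraph.ConnectedComponent.mem_supp_iff]
      exact (SimpleGraph.ConnectedComponent.sound hadj'.reachable).symm
    have h1 := hcard ((G.induce (Set.range f)ᶜ).connectedComponentMk ⟨h, hh⟩)
    have hss := (Nat.card_eq_one_iff_unique.mp h1).1
    have : (⟨(⟨h, hh⟩ : ↥(Set.range f)ᶜ), hmem1⟩ :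
        ((G.induce (Set.range f)ᶜ).connectedComponentMk ⟨h, hh⟩).supp) =
        ⟨⟨x, hxf⟩, hmem2⟩ := Subsingleton.elim _ _
    have : h = x := congrArg Subtype.val (congrArg Subtype.val this)
    exact hx.ne this
  set J : Set (ZMod n) := {t | G.Adj h (f t)} with hJ
  have hNh : G.neighborSet h = f '' J := by
    apply Set.Subset.antisymm
    · intro x hx
      obtain ⟨t, rfl⟩ := hNsub hx
      exact ⟨t, hx, rfl⟩
    · rintro x ⟨t, ht, rfl⟩
      exact ht
  have hU2 : U = f '' ((fun t => t + 1) '' J) := by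
    rw [hU]
    ext w
    simp only [Set.mem_setOf_eq, Set.mem_image]
    constructor
    · rintro ⟨i, hi, rfl⟩
      exact ⟨i + 1, ⟨i, hi, rfl⟩, rfl⟩
    · rintro ⟨s, ⟨i, hi, rfl⟩, rfl⟩
      exact ⟨i, hi, rfl⟩
  have hJd : J.ncard = d := by
    rw [hd, hNh, Set.ncard_image_of_injective _ hfinj]
  have hUd : U.ncard = d := by
    rw [hU2, Set.ncard_image_of_injective _ hfinj,
      Set.ncard_image_of_injective _ (add_left_injective 1), hJd]
  have hhU : h ∉ U := by
    rw [hU]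
    rintro ⟨i, hi, hEq⟩
    exact hh ⟨i + 1, hEq.symm⟩
  have hdk : k ≤ d := hd ▸ hdeg h
  -- Part 1
  have part1 : ∀ u ∈ U, (G.neighborSet u).ncard ≤ d := by
    intro u hu
    have hu' := hu
    rw [hU] at hu'
    obtain ⟨i, hAi, rfl⟩ := hu'
    have hxW : f (i + 1) ∈ U ∪ {h} := Or.inl (by rw [hU]; exact ⟨i, hAi, rfl⟩)
    have hnh1 : ¬ G.Adj h (f (i + 1)) := hNAH i hAi
    have hy_notW : f (i + 2) ∉ U ∪ {h} := by
      rintro (hy | hy)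
      · rw [hU] at hy
        obtain ⟨j, hj, hEq⟩ := hy
        have he1 : j + 1 = i + 2 := hfinj hEq.symm
        have he2 : j = i + 1 := by linear_combination he1
        exact hnh1 (he2 ▸ hj)
      · rw [Set.mem_singleton_iff] at hy
        exact hh ⟨i + 2, hy⟩
    by_cases hcase : ∃ p ∈ (U ∪ {h}) \ {f (i + 1)}, G.Adj (f (i + 2)) p
    · obtain ⟨p, ⟨hpW, hpne⟩, hpadj⟩ := hcase
      rw [Set.mem_singleton_iff] at hpne
      rcases hpW with hpU | hph
      · rw [hU] at hpU
        obtain ⟨j, hj, rfl⟩ := hpU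
        have hji' : i ≠ j := by
          rintro rfl
          exact hpne rfl
        have hji2 : j ≠ i + 1 := by
          rintro rfl
          exact hnh1 hj
        obtain ⟨g, hg, hnotin⟩ := surgeryG hC hh hji' hji2 hAi hj hpadj
        rw [hd]
        exact hmax n g _ hg hnotin
      · rw [Set.mem_singleton_iff] at hph
        subst hph
        obtain ⟨g, hg, hnotin⟩ := surgeryF hC hh hAi hpadj.symm
        rw [hd]
        exact hmax n g _ hg hnotin
    · exfalso
      push_neg at hcase
      set Z : Set V := (U ∪ {h}) \ {f (i + 1)} with hZdef
      have hfin : Z.Finite := Set.toFinite _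
      have hWcard : (U ∪ {h}).ncard = d + 1 := by
        rw [Set.union_singleton, Set.ncard_insert_of_notMem hhU (Set.toFinite _), hUd]
      have hZcard : Z.ncard = d := by
        rw [hZdef, Set.ncard_diff_singleton_of_mem hxW, hWcard]
        omega
      have hkZ : k ≤ hfin.toFinset.card := by
        rw [← Set.ncard_eq_toFinset_card _ hfin, hZcard]
        exact hdk
      obtain ⟨T, hTsub, hTcard⟩ := Finset.exists_subset_card_eq hkZ
      set z : Fin k → V := fun t => ((T.equivFin.symm (Fin.cast hTcard.symm t)) : V) with hzdef
      have hzT : ∀ t, z t ∈ T := fun t => (T.equivFin.symm (Fin.cast hTcard.symm t)).2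
      have hzZ : ∀ t, z t ∈ Z := fun t => hfin.mem_toFinset.mp (hTsub (hzT t))
      have hzW : ∀ t, z t ∈ U ∪ {h} := fun t => (hzZ t).1
      have hzne : ∀ t, z t ≠ f (i + 1) := fun t => (hzZ t).2
      have hzinj : Function.Injective z := by
        intro s t hst
        have h1 : T.equivFin.symm (Fin.cast hTcard.symm s)
            = T.equivFin.symm (Fin.cast hTcard.symm t) := Subtype.ext hst
        have h2 := T.equivFin.symm.injective h1
        exact Fin.cast_injective _ h2
      apply hfree
      refine ⟨f (i + 1), f (i + 2), z, hzinj, hzne, ?_, ?_, ?_, ?_, ?_, ?_⟩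
      · intro t ht
        exact hy_notW (ht ▸ hzW t)
      · intro hEq
        have := hfinj hEq
        have h01 : (0 : ZMod n) = 1 := by linear_combination this
        exact zero_ne_one h01
      · have := hfadj (i + 1)
        have harg : i + 1 + 1 = i + 2 := by ring
        rwa [harg] at this
      · intro t
        exact hindep _ hxW _ (hzW t)
      · intro t
        exact hcase (z t) (hzZ t)
      · intro s t
        exact hindep _ (hzW s) _ (hzW t)
  refine ⟨part1, ?_⟩
  -- Part 2
  have hsq : d ^ 2 = d * d := sq d
  rw [hsq]
  show ({p : V × V | p.1 ∈ U ∧ p.2 ∈ setNbhd G U ∧ G.Adj p.1 p.2}).ncard ≤ d * d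
  set E : Set (V × V) := {p : V × V | p.1 ∈ U ∧ p.2 ∈ setNbhd G U ∧ G.Adj p.1 p.2} with hE
  have hEfin : E.Finite := Set.toFinite _
  have hUfin : U.Finite := Set.toFinite _
  classical
  have hsub : hEfin.toFinset ⊆ hUfin.toFinset.biUnion
      (fun a => ((G.neighborSet a).toFinite.toFinset.image (fun b => (a, b)))) := by
    intro p hp
    rw [Set.Finite.mem_toFinset] at hp
    obtain ⟨h1, h2, h3⟩ := hp
    rw [Finset.mem_biUnion]
    refine ⟨p.1, hUfin.mem_toFinset.mpr h1, Finset.mem_image.mpr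
      ⟨p.2, (Set.Finite.mem_toFinset _).mpr h3, ?_⟩⟩
    exact Prod.mk.eta
  calc E.ncard = hEfin.toFinset.card := Set.ncard_eq_toFinset_card _ hEfin
    _ ≤ (hUfin.toFinset.biUnion
        (fun a => ((G.neighborSet a).toFinite.toFinset.image (fun b => (a, b))))).card :=
      Finset.card_le_card hsub
    _ ≤ ∑ a ∈ hUfin.toFinset,
        ((G.neighborSet a).toFinite.toFinset.image (fun b => (a, b))).card :=
      Finset.card_biUnion_le
    _ ≤ ∑ a ∈ hUfin.toFinset, d := by
      refine Finset.sum_le_sum fun a ha => ?_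
      refine le_trans Finset.card_image_le ?_
      rw [← Set.ncard_eq_toFinset_card]
      exact part1 a (hUfin.mem_toFinset.mp ha)
    _ = hUfin.toFinset.card * d := by rw [Finset.sum_const, smul_eq_mul]
    _ = d * d := by rw [← Set.ncard_eq_toFinset_card _ hUfin, hUd]
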